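/- Let D be a set with |D| = 2 and let m ≥ 1. Then the number of m-uniform endomorphisms on D⁺, up to combinatorial equivalence, equals (1/2)·(2^{2m} + 2^m). -/

import Mathlib

open FreeSemigroup MulAction

section Aux

variable {D : Type*}

private lemma fs_map_id : (FreeSemigroup.map (id : D → D)) = MulHom.id _ :=
  FreeSemigroup.hom_ext rfl

private lemma fs_map_comp (f g : D → D) :
    FreeSemigroup.map (f ∘ g) = (FreeSemigroup.map f).comp (FreeSemigroup.map g) :=
  FreeSemigroup.hom_ext rfl

private lemma fs_map_map (f g : D → D) (w : FreeSemigroup D) :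
    FreeSemigroup.map f (FreeSemigroup.map g w) = FreeSemigroup.map (f ∘ g) w := by
  rw [fs_map_comp]; rfl

variable (D) in
/-- m-uniform endomorphisms. -/
private abbrev US (m : ℕ) : Type _ :=
  {φ : FreeSemigroup D →ₙ* FreeSemigroup D //
      ∀ d : D, (φ (FreeSemigroup.of d)).length = m}

variable {m : ℕ}

private def conjAct (g : Equiv.Perm D) (φ : US D m) : US D m :=
  ⟨((FreeSemigroup.map ⇑g).comp φ.1).comp (FreeSemigroup.map ⇑g⁻¹), fun d => by
    simp only [MulHom.comp_apply, FreeSemigroup.map_of, FreeSemigroup.length_map]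
    exact φ.2 _⟩

private lemma conjAct_apply_of (g : Equiv.Perm D) (φ : US D m) (d : D) :
    (conjAct g φ).1 (of d) = FreeSemigroup.map ⇑g (φ.1 (of (g⁻¹ d))) := rfl

private instance usAction : MulAction (Equiv.Perm D) (US D m) where
  smul := conjAct
  one_smul φ := Subtype.ext <| FreeSemigroup.hom_ext <| funext fun d => by
    show (conjAct 1 φ).1 (of d) = φ.1 (of d)
    rw [conjAct_apply_of]
    simp only [inv_one, Equiv.Perm.coe_one]
    rw [fs_map_id]
    rfl
  mul_smul g h φ := Subtype.ext <| FreeSemigroup.hom_ext <| funext fun d => by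
    show (conjAct (g * h) φ).1 (of d) = (conjAct g (conjAct h φ)).1 (of d)
    rw [conjAct_apply_of, conjAct_apply_of, conjAct_apply_of, fs_map_map]
    rfl

private lemma smul_def (g : Equiv.Perm D) (φ : US D m) : g • φ = conjAct g φ := rfl

/-- Words of length m. -/
private abbrev W (D : Type*) (m : ℕ) : Type _ := {w : FreeSemigroup D // w.length = m}

/-- `US D m ≃ (D → W D m)`. -/
private def usEquiv : US D m ≃ (D → W D m) where
  toFun φ d := ⟨φ.1 (of d), φ.2 d⟩
  invFun f := ⟨FreeSemigroup.lift (fun d => (f d).1), fun d => by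
    simp only [FreeSemigroup.lift_of]; exact (f d).2⟩
  left_inv φ := Subtype.ext <| FreeSemigroup.hom_ext <| funext fun d => by
    simp [FreeSemigroup.lift_of]
  right_inv f := funext fun d => Subtype.ext <| by simp [FreeSemigroup.lift_of]

private def wEquiv (hm : 1 ≤ m) : W D m ≃ D × List.Vector D (m - 1) where
  toFun w := (w.1.head, ⟨w.1.tail, by
    have := w.2
    simp only [FreeSemigroup.length] at this
    omega⟩)
  invFun p := ⟨⟨p.1, p.2.1⟩, by
    have := p.2.2
    simp only [FreeSemigroup.length]
    omega⟩
  left_inv w := rfl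
  right_inv p := rfl

private lemma card_W [Fintype D] (hm : 1 ≤ m) (hcard : Fintype.card D = 2) :
    Nat.card (W D m) = 2 ^ m := by
  classical
  rw [Nat.card_congr (wEquiv hm), Nat.card_prod, Nat.card_eq_fintype_card,
    Nat.card_eq_fintype_card, card_vector, hcard]
  rw [show (2 : ℕ) * 2 ^ (m - 1) = 2 ^ (m - 1 + 1) by ring]
  congr 1
  omega

private lemma finite_W [Fintype D] : Finite (W D m) := by
  classical
  rcases Nat.eq_zero_or_pos m with h | h
  · subst h
    have : IsEmpty (W D 0) := ⟨fun w => by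
      have := w.2; simp only [FreeSemigroup.length] at this; omega⟩
    infer_instance
  · exact Finite.of_equiv _ (wEquiv h).symm

private lemma finite_US [Fintype D] : Finite (US D m) := by
  have : Finite (W D m) := finite_W
  have : Finite (D → W D m) := inferInstance
  exact Finite.of_equiv _ usEquiv.symm

end Aux


private lemma card_US [Fintype D] (hm : 1 ≤ m) (hcard : Fintype.card D = 2) :
    Nat.card (US D m) = 2 ^ (2 * m) := by
  rw [Nat.card_congr (usEquiv (D := D) (m := m)), Nat.card_fun, card_W hm hcard,
    Nat.card_eq_fintype_card, hcard, ← pow_mul, mul_comm]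

private lemma smul_eq_iff (g : Equiv.Perm D) (φ ψ : US D m) :
    g • φ = ψ ↔ (ψ : FreeSemigroup D →ₙ* FreeSemigroup D).comp (FreeSemigroup.map ⇑g)
      = (FreeSemigroup.map ⇑g).comp (φ : FreeSemigroup D →ₙ* FreeSemigroup D) := by
  constructor
  · rintro rfl
    refine FreeSemigroup.hom_ext (funext fun d => ?_)
    show (conjAct g φ).1 (FreeSemigroup.map ⇑g (of d)) = FreeSemigroup.map ⇑g (φ.1 (of d))
    rw [FreeSemigroup.map_of, conjAct_apply_of, Equiv.Perm.inv_def, Equiv.symm_apply_apply]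
  · intro h
    refine Subtype.ext (FreeSemigroup.hom_ext (funext fun d => ?_))
    show (conjAct g φ).1 (of d) = ψ.1 (of d)
    rw [conjAct_apply_of]
    have := congrArg (fun F : FreeSemigroup D →ₙ* FreeSemigroup D => F (of (g⁻¹ d))) h
    simp only [MulHom.comp_apply, FreeSemigroup.map_of, Equiv.Perm.inv_def, Equiv.apply_symm_apply] at this
    exact this.symm

private lemma rel_iff_orbitRel (φ ψ : US D m) :
    (∃ g : Equiv.Perm D,
        (ψ : FreeSemigroup D →ₙ* FreeSemigroup D).comp (FreeSemigroup.map ⇑g)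
          = (FreeSemigroup.map ⇑g).comp (φ : FreeSemigroup D →ₙ* FreeSemigroup D))
      ↔ orbitRel (Equiv.Perm D) (US D m) φ ψ := by
  rw [orbitRel_apply, MulAction.mem_orbit_iff]
  constructor
  · rintro ⟨g, h⟩
    exact ⟨g⁻¹, by rw [inv_smul_eq_iff]; exact ((smul_eq_iff g φ ψ).2 h).symm⟩
  · rintro ⟨g, h⟩
    exact ⟨g⁻¹, (smul_eq_iff g⁻¹ φ ψ).1 (by rw [inv_smul_eq_iff]; exact h.symm)⟩

private def fixSwapEquiv [DecidableEq D] {a b : D} (hab : a ≠ b) (hall : ∀ d : D, d = a ∨ d = b) :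
    (fixedBy (US D m) (Equiv.swap a b)) ≃ W D m where
  toFun ψ := ⟨ψ.1.1 (of a), ψ.1.2 a⟩
  invFun w :=
    ⟨⟨FreeSemigroup.lift (fun d => if d = a then w.1
          else FreeSemigroup.map ⇑(Equiv.swap a b) w.1), fun d => by
        simp only [FreeSemigroup.lift_of]
        split <;> simp [w.2]⟩, by
      set σ := Equiv.swap a b with hσ
      show σ • _ = _
      refine Subtype.ext (FreeSemigroup.hom_ext (funext fun d => ?_))
      show (conjAct σ _).1 (of d) = _
      rw [conjAct_apply_of]
      have hinv : σ⁻¹ = σ := Equiv.swap_inv a b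
      have hσσ : ∀ x : FreeSemigroup D,
          FreeSemigroup.map ⇑σ (FreeSemigroup.map ⇑σ x) = x := fun x => by
        rw [fs_map_map, show ⇑σ ∘ ⇑σ = id from funext fun y => Equiv.swap_apply_self a b y,
          fs_map_id]; rfl
      rw [hinv]
      show FreeSemigroup.map ⇑σ (FreeSemigroup.lift _ (of (σ d))) = FreeSemigroup.lift _ (of d)
      rw [FreeSemigroup.lift_of, FreeSemigroup.lift_of]
      rcases hall d with h | h
      · rw [h, Equiv.swap_apply_left, if_neg (Ne.symm hab), if_pos rfl]
        exact hσσ w.1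
      · rw [h, Equiv.swap_apply_right, if_pos rfl, if_neg (Ne.symm hab)]⟩
  left_inv ψ := by
    have hfix : ∀ d : D, FreeSemigroup.map ⇑(Equiv.swap a b)
        (ψ.1.1 (of (Equiv.swap a b d))) = ψ.1.1 (of d) := by
      intro d
      have h' : conjAct (Equiv.swap a b) ψ.1 = ψ.1 := ψ.2
      have h2 : (conjAct (Equiv.swap a b) ψ.1).1 (of d) = ψ.1.1 (of d) := by rw [h']
      rw [← h2, conjAct_apply_of, Equiv.swap_inv]
    refine Subtype.ext (Subtype.ext (FreeSemigroup.hom_ext (funext fun d => ?_)))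
    show FreeSemigroup.lift _ (of d) = ψ.1.1 (of d)
    rw [FreeSemigroup.lift_of]
    rcases hall d with h | h
    · rw [h, if_pos rfl]
    · rw [h, if_neg (Ne.symm hab), ← hfix b, Equiv.swap_apply_right]
  right_inv w := by
    refine Subtype.ext ?_
    show FreeSemigroup.lift _ (of a) = w.1
    rw [FreeSemigroup.lift_of, if_pos rfl]

/-- If `|D| = 2` and `m ≥ 1`, the number of `m`-uniform endomorphisms on the free semigroup
`D⁺`, up to combinatorial equivalence, is `(1/2)·(2^{2m} + 2^m)`. -/
theorem number_of_classes_of_m_uniform_endomorphisms_card_two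
    {D : Type*} [Fintype D] {m : ℕ} (hm : 1 ≤ m) (hcard : Fintype.card D = 2) :
    (Nat.card (Quot (fun φ ψ : {φ : FreeSemigroup D →ₙ* FreeSemigroup D //
          ∀ d : D, (φ (FreeSemigroup.of d)).length = m} =>
        ∃ g : Equiv.Perm D,
          (ψ : FreeSemigroup D →ₙ* FreeSemigroup D).comp (FreeSemigroup.map ⇑g)
            = (FreeSemigroup.map ⇑g).comp
                (φ : FreeSemigroup D →ₙ* FreeSemigroup D))) : ℚ)
      = (1 / 2) * ((2 : ℚ) ^ (2 * m) + (2 : ℚ) ^ m) := by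
  classical
  obtain ⟨a, b, hab, hset⟩ := (Nat.card_eq_two_iff (α := D)).1 (by rw [Nat.card_eq_fintype_card, hcard])
  have hall : ∀ d : D, d = a ∨ d = b := fun d => by
    have : d ∈ ({a, b} : Set D) := hset ▸ Set.mem_univ d
    simpa using this
  set σ := Equiv.swap a b with hσ
  haveI : Finite (US D m) := finite_US
  letI : Fintype (US D m) := Fintype.ofFinite _
  letI : ∀ g : Equiv.Perm D, Fintype (fixedBy (US D m) g) := fun g =>
    Fintype.ofFinite (fixedBy (US D m) g)
  letI : Fintype (Quotient (orbitRel (Equiv.Perm D) (US D m))) :=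
    Fintype.ofFinite (Quotient (orbitRel (Equiv.Perm D) (US D m)))
  have hb := MulAction.sum_card_fixedBy_eq_card_orbits_mul_card_group
    (Equiv.Perm D) (US D m)
  -- universe of Perm D is {1, σ}
  have h1σ : (1 : Equiv.Perm D) ≠ σ := by
    intro h
    have : a = b := by
      have := congrArg (fun g : Equiv.Perm D => g a) h
      simpa [hσ] using this
    exact hab this
  have huniv : (Finset.univ : Finset (Equiv.Perm D)) = {1, σ} := by
    refine (Finset.eq_of_subset_of_card_le (Finset.subset_univ _) ?_).symm
    rw [Finset.card_pair h1σ, Finset.card_univ, Fintype.card_perm, hcard]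
    norm_num [Nat.factorial]
  rw [huniv, Finset.sum_pair h1σ] at hb
  have hfix1 : Fintype.card (fixedBy (US D m) (1 : Equiv.Perm D)) = 2 ^ (2 * m) := by
    have e1 : (fixedBy (US D m) (1 : Equiv.Perm D)) ≃ US D m :=
      Equiv.subtypeUnivEquiv (fun φ => one_smul (Equiv.Perm D) φ)
    rw [← Nat.card_eq_fintype_card, Nat.card_congr e1, card_US hm hcard]
  have hfixσ : Fintype.card (fixedBy (US D m) σ) = 2 ^ m := by
    rw [← Nat.card_eq_fintype_card, Nat.card_congr (fixSwapEquiv hab hall),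
      card_W hm hcard]
  rw [hfix1, hfixσ, Fintype.card_perm, hcard] at hb
  -- identify the quotient
  have hquot : Nat.card (Quot (fun φ ψ : US D m =>
      ∃ g : Equiv.Perm D,
        (ψ : FreeSemigroup D →ₙ* FreeSemigroup D).comp (FreeSemigroup.map ⇑g)
          = (FreeSemigroup.map ⇑g).comp (φ : FreeSemigroup D →ₙ* FreeSemigroup D)))
      = Fintype.card (Quotient (orbitRel (Equiv.Perm D) (US D m))) := by
    rw [← Nat.card_eq_fintype_card]
    exact Nat.card_congr (Quot.congrRight (fun φ ψ => rel_iff_orbitRel φ ψ))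
  rw [show Nat.factorial 2 = 2 from rfl] at hb
  have key : (2 : ℚ) ^ (2 * m) + 2 ^ m
      = (Nat.card (Quot (fun φ ψ : US D m =>
          ∃ g : Equiv.Perm D,
            (ψ : FreeSemigroup D →ₙ* FreeSemigroup D).comp (FreeSemigroup.map ⇑g)
              = (FreeSemigroup.map ⇑g).comp (φ : FreeSemigroup D →ₙ* FreeSemigroup D))) : ℚ)
        * 2 := by
    rw [hquot]
    exact_mod_cast hb
  linarith [key]
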